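/- Let ρ > 0, ε ∈ [0,1), ν ∈ [0,1], m₁, m₂, α̃, α₂, β, κ∞ ∈ ℝ and ι_c > 0. With e defined as in the critical case η = 0, i.e. e(u) = −((1−ν)²/(1−ε))·(m₂ − m₁(2α̃ρ − α₂m₁)/ρ²)·[𝓘₀(u)/2 − (exp(2ι_c u)/ρ)·L(ρ, −2ι_c, u)] + (ν(1−ν)m₁/(2ρ²(1−ε)))·(α̃ − α₂m₁/ρ)·ρ²·𝓘₁(u) − (α₂ν²m₁²/(4ρ³(1−ε)))·[ρ²·𝓘₁(u) + (1/2)·ρ³·𝓘₂(u) + (1/12)·ρ⁴·𝓘₃(u)], define g(u) = −2βκ∞·((1−ν)²/(1−ε))·(m₂ − m₁(2α̃ρ − α₂m₁)/ρ²)·{𝓘₁(u)/2 − (1/(2ι_c ρ))·[exp(2ι_c u)·L(ρ, −2ι_c, u) − log(1 + ρu/2)]} + (βκ∞ν(1−ν)m₁/(2ρ³(1−ε)))·(α̃ − α₂m₁/ρ)·ρ³·𝓘₂(u) − (βκ∞α₂ν²m₁²/(4ρ⁴(1−ε)))·[ρ³·𝓘₂(u) + (1/3)·ρ⁴·𝓘₃(u)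 + (1/24)·ρ⁵·𝓘₄(u)]. Then g(0) = 0 and g'(u) = 2βκ∞·e(u) for all u ≥ 0. -/

import Mathlib

/-- L(r, λ, t) = r·∫₀ᵗ exp(λs)/(2 + rs) ds. -/
noncomputable def Lfun (r lam t : ℝ) : ℝ := r * ∫ s in (0:ℝ)..t, Real.exp (lam * s) / (2 + r * s)

/-- 𝓘_p(u) = exp(2ι_c u)·∫₀ᵘ s^p·exp(−2ι_c s) ds. -/
noncomputable def Ifun (ιc : ℝ) (p : ℕ) (u : ℝ) : ℝ :=
  Real.exp (2 * ιc * u) * ∫ s in (0:ℝ)..u, s ^ p * Real.exp (-(2 * ιc * s))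

lemma expE (ιc u : ℝ) : Real.exp (2 * ιc * u) * Real.exp (-(2 * ιc * u)) = 1 := by
  rw [← Real.exp_add]; simp

lemma IfunDeriv (ιc : ℝ) (p : ℕ) (u : ℝ) :
    HasDerivAt (fun u => Ifun ιc p u) (2 * ιc * Ifun ιc p u + u ^ p) u := by
  simp only [Ifun]
  have hc : Continuous (fun s : ℝ => s ^ p * Real.exp (-(2 * ιc * s))) := by fun_prop
  have hJ : HasDerivAt (fun t => ∫ s in (0:ℝ)..t, s ^ p * Real.exp (-(2 * ιc * s)))
      (u ^ p * Real.exp (-(2 * ιc * u))) u :=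
    intervalIntegral.integral_hasDerivAt_right (hc.intervalIntegrable _ _)
      (hc.stronglyMeasurableAtFilter _ _) hc.continuousAt
  have hE : HasDerivAt (fun u : ℝ => Real.exp (2 * ιc * u))
      (Real.exp (2 * ιc * u) * (2 * ιc)) u := by
    simpa using (((hasDerivAt_id u).const_mul (2 * ιc)).exp)
  have := hE.mul hJ
  refine this.congr_deriv ?_
  symm
  have h := expE ιc u
  linear_combination (-(u ^ p) : ℝ) * h

lemma parts (ιc : ℝ) (p : ℕ) (u : ℝ) :
    ((p : ℝ) + 1) * Ifun ιc p u = 2 * ιc * Ifun ιc (p + 1) u + u ^ (p + 1) := by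
  have key : (∫ s in (0:ℝ)..u, (((p : ℝ) + 1) * (s ^ p * Real.exp (-(2 * ιc * s)))
        - 2 * ιc * (s ^ (p + 1) * Real.exp (-(2 * ιc * s)))))
      = u ^ (p + 1) * Real.exp (-(2 * ιc * u)) - (0:ℝ) ^ (p + 1) * Real.exp (-(2 * ιc * 0)) := by
    apply intervalIntegral.integral_eq_sub_of_hasDerivAt
      (f := fun s => s ^ (p + 1) * Real.exp (-(2 * ιc * s)))
    · intro x _
      have h1 : HasDerivAt (fun s : ℝ => s ^ (p + 1)) (((p : ℝ) + 1) * x ^ p) x := by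
        simpa using hasDerivAt_pow (p + 1) x
      have h2 : HasDerivAt (fun s : ℝ => Real.exp (-(2 * ιc * s)))
          (Real.exp (-(2 * ιc * x)) * (-(2 * ιc))) x := by
        simpa using ((((hasDerivAt_id x).const_mul (2 * ιc)).neg).exp)
      refine (h1.mul h2).congr_deriv ?_
      symm
      ring
    · apply Continuous.intervalIntegrable; fun_prop
  rw [intervalIntegral.integral_sub ((by fun_prop : Continuous _).intervalIntegrable _ _)
      ((by fun_prop : Continuous _).intervalIntegrable _ _),
    intervalIntegral.integral_const_mul, intervalIntegral.integral_const_mul] at key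
  simp only [Ifun]
  have h := expE ιc u
  have h0 : ((0:ℝ)) ^ (p + 1) = 0 := zero_pow (Nat.succ_ne_zero p)
  linear_combination (Real.exp (2 * ιc * u)) * key + (u ^ (p + 1)) * h
    - (Real.exp (2 * ιc * u) * Real.exp (-(2 * ιc * 0))) * h0


lemma LfunDeriv (ρ lam u : ℝ) (hρ : 0 < ρ) (hu : 0 ≤ u) :
    HasDerivAt (fun u => Lfun ρ lam u) (ρ * (Real.exp (lam * u) / (2 + ρ * u))) u := by
  simp only [Lfun]
  have hne : ∀ s : ℝ, 0 ≤ s → (2 + ρ * s) ≠ 0 := fun s hs => by positivity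
  have hm : Measurable (fun s : ℝ => Real.exp (lam * s) / (2 + ρ * s)) := by
    apply Measurable.div <;> fun_prop
  have hco : ContinuousOn (fun s : ℝ => Real.exp (lam * s) / (2 + ρ * s)) (Set.uIcc 0 u) := by
    apply ContinuousOn.div (by fun_prop) (by fun_prop)
    intro x hx
    rw [Set.uIcc_of_le hu] at hx
    exact hne x hx.1
  have hint : IntervalIntegrable (fun s : ℝ => Real.exp (lam * s) / (2 + ρ * s))
      MeasureTheory.volume 0 u := hco.intervalIntegrable
  have hca : ContinuousAt (fun s : ℝ => Real.exp (lam * s) / (2 + ρ * s)) u :=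
    ContinuousAt.div (by fun_prop) (by fun_prop) (hne u hu)
  have hsm : StronglyMeasurableAtFilter (fun s : ℝ => Real.exp (lam * s) / (2 + ρ * s))
      (nhds u) MeasureTheory.volume :=
    ⟨Set.univ, Filter.univ_mem, (hm.aestronglyMeasurable).restrict⟩
  exact (intervalIntegral.integral_hasDerivAt_right hint hsm hca).const_mul ρ

lemma ELDeriv (ρ ιc u : ℝ) (hρ : 0 < ρ) (hu : 0 ≤ u) :
    HasDerivAt (fun u => Real.exp (2 * ιc * u) * Lfun ρ (-(2 * ιc)) u)
      (2 * ιc * (Real.exp (2 * ιc * u) * Lfun ρ (-(2 * ιc)) u) + ρ / (2 + ρ * u)) u := by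
  have hE : HasDerivAt (fun u : ℝ => Real.exp (2 * ιc * u))
      (Real.exp (2 * ιc * u) * (2 * ιc)) u := by
    simpa using (((hasDerivAt_id u).const_mul (2 * ιc)).exp)
  have := hE.mul (LfunDeriv ρ (-(2 * ιc)) u hρ hu)
  refine this.congr_deriv ?_
  symm
  have h : Real.exp (2 * ιc * u) * Real.exp (-(2 * ιc) * u) = 1 := by
    rw [← Real.exp_add]; ring_nf; exact Real.exp_zero
  linear_combination (-(ρ / (2 + ρ * u))) * h

lemma logDeriv' (ρ u : ℝ) (hρ : 0 < ρ) (hu : 0 ≤ u) :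
    HasDerivAt (fun u : ℝ => Real.log (1 + ρ * u / 2)) (ρ / (2 + ρ * u)) u := by
  have h1 : HasDerivAt (fun u : ℝ => 1 + ρ * u / 2) (ρ / 2) u := by
    simpa using (((hasDerivAt_id u).const_mul ρ).div_const 2).const_add 1
  have hne : (1 + ρ * u / 2) ≠ 0 := by positivity
  have := h1.log hne
  convert this using 1
  have h2 : (2 + ρ * u) ≠ 0 := by positivity
  field_simp

/-- e(u) in the critical case η = 0. -/
noncomputable def eCrit (ρ ε ν m₁ m₂ αt α₂ ιc : ℝ) (u : ℝ) : ℝ :=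
  -((1 - ν) ^ 2 / (1 - ε)) * (m₂ - m₁ * (2 * αt * ρ - α₂ * m₁) / ρ ^ 2)
      * (Ifun ιc 0 u / 2 - (Real.exp (2 * ιc * u) / ρ) * Lfun ρ (-(2 * ιc)) u)
    + (ν * (1 - ν) * m₁ / (2 * ρ ^ 2 * (1 - ε))) * (αt - α₂ * m₁ / ρ) * (ρ ^ 2 * Ifun ιc 1 u)
    - (α₂ * ν ^ 2 * m₁ ^ 2 / (4 * ρ ^ 3 * (1 - ε)))
        * (ρ ^ 2 * Ifun ιc 1 u + (1 / 2) * ρ ^ 3 * Ifun ιc 2 u + (1 / 12) * ρ ^ 4 * Ifun ιc 3 u)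

/-- g(u) in the critical case η = 0. -/
noncomputable def gCrit (ρ ε ν m₁ m₂ αt α₂ β κinf ιc : ℝ) (u : ℝ) : ℝ :=
  -(2 * β * κinf) * ((1 - ν) ^ 2 / (1 - ε)) * (m₂ - m₁ * (2 * αt * ρ - α₂ * m₁) / ρ ^ 2)
      * (Ifun ιc 1 u / 2
          - (1 / (2 * ιc * ρ))
              * (Real.exp (2 * ιc * u) * Lfun ρ (-(2 * ιc)) u - Real.log (1 + ρ * u / 2)))
    + (β * κinf * ν * (1 - ν) * m₁ / (2 * ρ ^ 3 * (1 - ε))) * (αt - α₂ * m₁ / ρ)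
        * (ρ ^ 3 * Ifun ιc 2 u)
    - (β * κinf * α₂ * ν ^ 2 * m₁ ^ 2 / (4 * ρ ^ 4 * (1 - ε)))
        * (ρ ^ 3 * Ifun ιc 2 u + (1 / 3) * ρ ^ 4 * Ifun ιc 3 u + (1 / 24) * ρ ^ 5 * Ifun ιc 4 u)

theorem gCrit_ODE (ρ ε ν m₁ m₂ αt α₂ β κinf ιc : ℝ) (hρ : 0 < ρ)
    (hε : ε ∈ Set.Ico (0:ℝ) 1) (hν : ν ∈ Set.Icc (0:ℝ) 1) (hιc : 0 < ιc) :
    gCrit ρ ε ν m₁ m₂ αt α₂ β κinf ιc 0 = 0 ∧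
    ∀ u : ℝ, 0 ≤ u →
      HasDerivAt (gCrit ρ ε ν m₁ m₂ αt α₂ β κinf ιc)
        (2 * β * κinf * eCrit ρ ε ν m₁ m₂ αt α₂ ιc u) u := by
  have hε1 : (1:ℝ) - ε ≠ 0 := by have := hε.2; intro h; nlinarith
  constructor
  · simp [gCrit, Ifun, Lfun, intervalIntegral.integral_same]
  · intro u hu
    have hEL := ELDeriv ρ ιc u hρ hu
    have hlog := logDeriv' ρ u hρ hu
    have h1 : HasDerivAt (fun u => Ifun ιc 1 u / 2
        - (1 / (2 * ιc * ρ)) * (Real.exp (2 * ιc * u) * Lfun ρ (-(2 * ιc)) u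
            - Real.log (1 + ρ * u / 2)))
        (ιc * Ifun ιc 1 u + u / 2
          - Real.exp (2 * ιc * u) * Lfun ρ (-(2 * ιc)) u / ρ) u := by
      have a := (IfunDeriv ιc 1 u).div_const 2
      have b := (hEL.sub hlog).const_mul (1 / (2 * ιc * ρ))
      refine (a.sub b).congr_deriv ?_
      symm
      field_simp
      ring
    have h2 : HasDerivAt (fun u => ρ ^ 3 * Ifun ιc 2 u)
        (ρ ^ 3 * (2 * ιc * Ifun ιc 2 u + u ^ 2)) u := (IfunDeriv ιc 2 u).const_mul (ρ ^ 3)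
    have h3 : HasDerivAt (fun u => ρ ^ 3 * Ifun ιc 2 u + (1 / 3) * ρ ^ 4 * Ifun ιc 3 u
        + (1 / 24) * ρ ^ 5 * Ifun ιc 4 u)
        (ρ ^ 3 * (2 * ιc * Ifun ιc 2 u + u ^ 2)
          + (1 / 3) * ρ ^ 4 * (2 * ιc * Ifun ιc 3 u + u ^ 3)
          + (1 / 24) * ρ ^ 5 * (2 * ιc * Ifun ιc 4 u + u ^ 4)) u :=
      (((IfunDeriv ιc 2 u).const_mul (ρ ^ 3)).add
        ((IfunDeriv ιc 3 u).const_mul ((1 / 3) * ρ ^ 4))).add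
        ((IfunDeriv ιc 4 u).const_mul ((1 / 24) * ρ ^ 5))
    have hg : HasDerivAt (gCrit ρ ε ν m₁ m₂ αt α₂ β κinf ιc)
        (-(2 * β * κinf) * ((1 - ν) ^ 2 / (1 - ε)) * (m₂ - m₁ * (2 * αt * ρ - α₂ * m₁) / ρ ^ 2)
            * (ιc * Ifun ιc 1 u + u / 2
                - Real.exp (2 * ιc * u) * Lfun ρ (-(2 * ιc)) u / ρ)
          + (β * κinf * ν * (1 - ν) * m₁ / (2 * ρ ^ 3 * (1 - ε))) * (αt - α₂ * m₁ / ρ)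
              * (ρ ^ 3 * (2 * ιc * Ifun ιc 2 u + u ^ 2))
          - (β * κinf * α₂ * ν ^ 2 * m₁ ^ 2 / (4 * ρ ^ 4 * (1 - ε)))
              * (ρ ^ 3 * (2 * ιc * Ifun ιc 2 u + u ^ 2)
                + (1 / 3) * ρ ^ 4 * (2 * ιc * Ifun ιc 3 u + u ^ 3)
                + (1 / 24) * ρ ^ 5 * (2 * ιc * Ifun ιc 4 u + u ^ 4))) u := by
      have T1 := h1.const_mul (-(2 * β * κinf) * ((1 - ν) ^ 2 / (1 - ε))
        * (m₂ - m₁ * (2 * αt * ρ - α₂ * m₁) / ρ ^ 2))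
      have T2 := h2.const_mul ((β * κinf * ν * (1 - ν) * m₁ / (2 * ρ ^ 3 * (1 - ε)))
        * (αt - α₂ * m₁ / ρ))
      have T3 := h3.const_mul (β * κinf * α₂ * ν ^ 2 * m₁ ^ 2 / (4 * ρ ^ 4 * (1 - ε)))
      exact (T1.add T2).sub T3
    have heq : 2 * β * κinf * eCrit ρ ε ν m₁ m₂ αt α₂ ιc u
        = -(2 * β * κinf) * ((1 - ν) ^ 2 / (1 - ε)) * (m₂ - m₁ * (2 * αt * ρ - α₂ * m₁) / ρ ^ 2)
            * (ιc * Ifun ιc 1 u + u / 2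
                - Real.exp (2 * ιc * u) * Lfun ρ (-(2 * ιc)) u / ρ)
          + (β * κinf * ν * (1 - ν) * m₁ / (2 * ρ ^ 3 * (1 - ε))) * (αt - α₂ * m₁ / ρ)
              * (ρ ^ 3 * (2 * ιc * Ifun ιc 2 u + u ^ 2))
          - (β * κinf * α₂ * ν ^ 2 * m₁ ^ 2 / (4 * ρ ^ 4 * (1 - ε)))
              * (ρ ^ 3 * (2 * ιc * Ifun ιc 2 u + u ^ 2)
                + (1 / 3) * ρ ^ 4 * (2 * ιc * Ifun ιc 3 u + u ^ 3)
                + (1 / 24) * ρ ^ 5 * (2 * ιc * Ifun ιc 4 u + u ^ 4)) := by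
      have e0 : Ifun ιc 0 u = 2 * ιc * Ifun ιc 1 u + u := by
        have := parts ιc 0 u; norm_num at this; linarith
      have e1 : Ifun ιc 1 u = (2 * ιc * Ifun ιc 2 u + u ^ 2) / 2 := by
        have := parts ιc 1 u; norm_num at this; linarith
      have e2 : Ifun ιc 2 u = (2 * ιc * Ifun ιc 3 u + u ^ 3) / 3 := by
        have := parts ιc 2 u; norm_num at this; linarith
      have e3 : Ifun ιc 3 u = (2 * ιc * Ifun ιc 4 u + u ^ 4) / 4 := by
        have := parts ιc 3 u; norm_num at this; linarith
      simp only [eCrit]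
      rw [e0, e1, e2, e3]
      field_simp
      ring
    rw [heq]
    exact hg
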